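/- With β(1) = (5 − √13)/2 and c(x) = x²(3−2x), we have I(1, β(1)) = 0, i.e., ∫₀¹ (c(x)²·x^{−(5−√13)/2} + c(1−x)²·(1−x)^{−(5−√13)/2} − 1)·(x(1−x))^{−3/2} dx = 0. -/

import Mathlib

/-- The limiting split function `c(x) = x²(3-2x)`. -/
def cfun (x : ℝ) : ℝ := x ^ 2 * (3 - 2 * x)

open MeasureTheory intervalIntegral Set Filter Topology

lemma r_gt : (3:ℝ) < Real.sqrt 13 := by
  have := Real.lt_sqrt (x := 3) (y := 13) (by norm_num)
  rw [this]; norm_num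
lemma r_sq : Real.sqrt 13 ^ 2 = 13 := Real.sq_sqrt (by norm_num)

noncomputable def Qfun (x : ℝ) : ℝ := 18/(Real.sqrt 13+2) - 8*x/(Real.sqrt 13+3)
noncomputable def G1 (x : ℝ) : ℝ := x ^ (Real.sqrt 13/2 + 1) * ((1-x) ^ (-(1/2) : ℝ) * Qfun x)
noncomputable def Gfun (x : ℝ) : ℝ :=
  G1 x - G1 (1-x) + 2*(1-2*x) * (x*(1-x)) ^ (-(1/2) : ℝ)

lemma hkey (x : ℝ) :
    (Real.sqrt 13/2 + 1)*(1-x)*Qfun x + x*(Qfun x/2 - 8*(1-x)/(Real.sqrt 13+3)) = (3-2*x)^2 := by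
  have h2 : Real.sqrt 13 + 2 ≠ 0 := by have := r_gt; positivity
  have h3 : Real.sqrt 13 + 3 ≠ 0 := by have := r_gt; positivity
  unfold Qfun
  field_simp
  linear_combination (-2*x) * r_sq

lemma Qfun_one : Qfun 1 = 2 := by
  have h2 : Real.sqrt 13 + 2 ≠ 0 := by have := r_gt; positivity
  have h3 : Real.sqrt 13 + 3 ≠ 0 := by have := r_gt; positivity
  unfold Qfun
  field_simp
  linear_combination (-2) * r_sq

lemma hQderiv (x : ℝ) : HasDerivAt Qfun (-(8/(Real.sqrt 13+3))) x := by
  have h := ((hasDerivAt_id x).const_mul ((8:ℝ)/(Real.sqrt 13+3))).const_sub ((18:ℝ)/(Real.sqrt 13+2))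
  have e : Qfun = fun x : ℝ => 18/(Real.sqrt 13+2) - 8/(Real.sqrt 13+3) * x := by
    funext y; unfold Qfun; ring
  rw [e]; simpa using h

lemma G1_deriv {x : ℝ} (hx : 0 < x) (hx1 : x < 1) :
    HasDerivAt G1 (cfun x ^ 2 * x ^ (-((5 - Real.sqrt 13) / 2)) * (x * (1 - x)) ^ (-(3 / 2) : ℝ)) x := by
  have h1x : (0:ℝ) < 1 - x := by linarith
  have hA : HasDerivAt (fun y : ℝ => y ^ (Real.sqrt 13/2 + 1))
      ((Real.sqrt 13/2 + 1) * x ^ (Real.sqrt 13/2 + 1 - 1)) x :=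
    Real.hasDerivAt_rpow_const (Or.inl hx.ne')
  have hL : HasDerivAt (fun y : ℝ => 1 - y) (-1) x := (hasDerivAt_id x).const_sub 1
  have hB : HasDerivAt (fun y : ℝ => (1 - y) ^ (-(1/2) : ℝ))
      (-1 * (-(1/2)) * (1-x) ^ ((-(1/2) : ℝ) - 1)) x := hL.rpow_const (Or.inl h1x.ne')
  have H := hA.mul (hB.mul (hQderiv x))
  have hG : G1 = fun y : ℝ => y ^ (Real.sqrt 13/2 + 1) * ((1-y) ^ (-(1/2) : ℝ) * Qfun y) := rfl
  rw [hG]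
  refine H.congr_deriv (Eq.symm ?_); simp only [Pi.mul_apply]
  rw [show Real.sqrt 13/2 + 1 - 1 = Real.sqrt 13/2 by ring,
      show ((-(1/2) : ℝ) - 1) = -(3/2) by norm_num,
      show ((-(1/2):ℝ)) = 1 + -(3/2) by norm_num]
  rw [Real.rpow_add h1x, Real.rpow_one, Real.rpow_add hx, Real.rpow_one]
  rw [Real.mul_rpow hx.le h1x.le]
  have hxpow : cfun x ^ 2 * x ^ (-((5 - Real.sqrt 13) / 2)) * x ^ (-(3/2) : ℝ)
      = (3-2*x)^2 * x ^ (Real.sqrt 13/2) := by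
    have h4 : cfun x ^ 2 = x ^ ((4:ℕ):ℝ) * (3-2*x)^2 := by
      rw [Real.rpow_natCast]; unfold cfun; ring
    rw [h4, mul_assoc, mul_comm (x ^ ((4:ℕ):ℝ)), ← mul_assoc, mul_assoc _ (x ^ ((4:ℕ):ℝ)),
        ← Real.rpow_add hx, mul_assoc, ← Real.rpow_add hx]
    rw [show ((4:ℕ):ℝ) + -((5 - Real.sqrt 13) / 2) + -(3/2) = Real.sqrt 13/2 by push_cast; ring]
  linear_combination ((1-x) ^ (-(3/2):ℝ)) * hxpow
    - (x ^ (Real.sqrt 13/2) * ((1-x) ^ (-(3/2):ℝ))) * hkey x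

lemma Gfun_deriv {x : ℝ} (hx : 0 < x) (hx1 : x < 1) :
    HasDerivAt Gfun
      ((cfun x ^ 2 * x ^ (-((5 - Real.sqrt 13) / 2)) +
          cfun (1 - x) ^ 2 * (1 - x) ^ (-((5 - Real.sqrt 13) / 2)) - 1) *
        (x * (1 - x)) ^ (-(3 / 2) : ℝ)) x := by
  have h1x : (0:ℝ) < 1 - x := by linarith
  have hd1 := G1_deriv hx hx1
  have hL : HasDerivAt (fun y : ℝ => 1 - y) (-1) x := (hasDerivAt_id x).const_sub 1
  have hre : HasDerivAt (fun y : ℝ => G1 (1 - y))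
      ((cfun (1-x) ^ 2 * (1-x) ^ (-((5 - Real.sqrt 13) / 2)) *
        ((1-x) * (1 - (1-x))) ^ (-(3/2) : ℝ)) * (-1)) x :=
    (G1_deriv h1x (by linarith)).comp x hL
  have hxx : 0 < x * (1-x) := mul_pos hx h1x
  have hf : HasDerivAt (fun y : ℝ => y * (1 - y)) (1 - 2*x) x := by
    have h := (hasDerivAt_id x).mul hL
    refine h.congr_deriv (Eq.symm ?_); simp; ring
  have hP : HasDerivAt (fun y : ℝ => (y * (1 - y)) ^ (-(1/2) : ℝ))
      ((1 - 2*x) * (-(1/2)) * (x*(1-x)) ^ ((-(1/2) : ℝ) - 1)) x := hf.rpow_const (Or.inl hxx.ne')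
  have hc : HasDerivAt (fun y : ℝ => 2*(1 - 2*y)) (-4) x := by
    have h := (((hasDerivAt_id x).const_mul (2:ℝ)).const_sub 1).const_mul (2:ℝ)
    exact h.congr_deriv (by norm_num)
  have H := (hd1.sub hre).add (hc.mul hP)
  have hG : Gfun = fun y : ℝ =>
      (G1 y - G1 (1-y)) + (2*(1-2*y)) * ((y*(1-y)) ^ (-(1/2) : ℝ)) := by
    funext y; unfold Gfun; ring
  rw [hG]
  refine H.congr_deriv (Eq.symm ?_)
  rw [sub_sub_cancel, mul_comm ((1:ℝ)-x) x,
      show ((-(1/2) : ℝ) - 1) = -(3/2) by norm_num,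
      show ((-(1/2):ℝ)) = 1 + -(3/2) by norm_num,
      Real.rpow_add hxx, Real.rpow_one]
  ring

lemma Gfun_reflect (x : ℝ) : Gfun (1-x) = - Gfun x := by
  unfold Gfun
  rw [sub_sub_cancel, mul_comm ((1:ℝ)-x) x]
  ring

noncomputable def phi (x : ℝ) : ℝ :=
  2*(1-2*x) * (1-x) ^ (-(1/2) : ℝ) - (1-x) ^ (Real.sqrt 13/2 + 1) * Qfun (1-x)

lemma phi_zero : phi 0 = 0 := by
  unfold phi
  norm_num [Real.one_rpow, Qfun_one]

lemma phi_hasDeriv : ∃ m, HasDerivAt phi m 0 := by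
  have hL : HasDerivAt (fun y : ℝ => 1 - y) (-1) 0 := (hasDerivAt_id 0).const_sub 1
  have hne : (1:ℝ) - 0 ≠ 0 := by norm_num
  have hB := hL.rpow_const (p := (-(1/2) : ℝ)) (Or.inl hne)
  have hc : HasDerivAt (fun y : ℝ => 2*(1 - 2*y)) (-4) 0 := by
    have h := (((hasDerivAt_id (0:ℝ)).const_mul (2:ℝ)).const_sub 1).const_mul (2:ℝ)
    exact h.congr_deriv (by norm_num)
  have hp1 := hc.mul hB
  have hQc : HasDerivAt (fun y : ℝ => Qfun (1 - y)) (-(8/(Real.sqrt 13+3)) * (-1)) 0 :=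
    (hQderiv ((1:ℝ) - 0)).comp 0 hL
  have hA := hL.rpow_const (p := (Real.sqrt 13/2 + 1)) (Or.inl hne)
  have hp2 := hA.mul hQc
  exact ⟨_, hp1.sub hp2⟩

lemma rpow_half_tendsto : Tendsto (fun x : ℝ => x ^ ((1:ℝ)/2)) (𝓝[>] (0:ℝ)) (𝓝 0) := by
  have c := (Real.continuousAt_rpow_const 0 ((1:ℝ)/2) (Or.inr (by norm_num))).tendsto
  rw [Real.zero_rpow (by norm_num : (1:ℝ)/2 ≠ 0)] at c
  exact c.mono_left nhdsWithin_le_nhds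

lemma G1_tendsto : Tendsto G1 (𝓝[>] (0:ℝ)) (𝓝 0) := by
  have hp : (0:ℝ) < Real.sqrt 13/2 + 1 := by positivity
  have h1 : Tendsto (fun x : ℝ => x ^ (Real.sqrt 13/2 + 1)) (𝓝[>] 0) (𝓝 0) := by
    have c := (Real.continuousAt_rpow_const 0 _ (Or.inr hp.le)).tendsto
    rw [Real.zero_rpow hp.ne'] at c
    exact c.mono_left nhdsWithin_le_nhds
  have h2 : Tendsto (fun x : ℝ => (1-x) ^ (-(1/2) : ℝ) * Qfun x) (𝓝 (0:ℝ))
      (𝓝 (((1:ℝ)-0) ^ (-(1/2) : ℝ) * Qfun 0)) := by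
    have hc1 : ContinuousAt (fun x : ℝ => (1-x) ^ (-(1/2) : ℝ)) 0 :=
      (continuous_const.sub continuous_id).continuousAt.rpow_const (Or.inl (by norm_num))
    exact (hc1.mul (hQderiv 0).differentiableAt.continuousAt).tendsto
  have h := h1.mul (h2.mono_left nhdsWithin_le_nhds)
  rw [zero_mul] at h
  exact h

lemma Gfun_tendsto_zero : Tendsto Gfun (𝓝[>] (0:ℝ)) (𝓝 0) := by
  obtain ⟨m, hm⟩ := phi_hasDeriv
  have hslope := hasDerivAt_iff_tendsto_slope.1 hm
  rw [slope_fun_def_field] at hslope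
  have hs : Tendsto (fun x => (phi x - phi 0)/(x-0)) (𝓝[>] (0:ℝ)) (𝓝 m) :=
    hslope.mono_left (nhdsWithin_mono _ (fun y hy => ne_of_gt hy))
  have hmain := G1_tendsto.add (rpow_half_tendsto.mul hs)
  have hev : ∀ᶠ x in 𝓝[>] (0:ℝ),
      G1 x + x ^ ((1:ℝ)/2) * ((phi x - phi 0)/(x-0)) = Gfun x := by
    filter_upwards [Ioo_mem_nhdsGT_of_mem (by norm_num : (0:ℝ) ∈ Ico (0:ℝ) 1)] with x hx
    obtain ⟨hx0, hx1⟩ := hx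
    have h1x : (0:ℝ) < 1 - x := by linarith
    rw [phi_zero, sub_zero, sub_zero]
    have hxp : x * x ^ (-(1/2) : ℝ) = x ^ ((1:ℝ)/2) := by
      nth_rewrite 1 [← Real.rpow_one x]
      rw [← Real.rpow_add hx0]
      norm_num
    have hhalfx : x ^ ((1:ℝ)/2) * (phi x / x) = x ^ (-(1/2) : ℝ) * phi x := by
      rw [← hxp]
      field_simp
    rw [hhalfx]
    simp only [Gfun, phi, G1]
    rw [sub_sub_cancel, Real.mul_rpow hx0.le h1x.le]
    ring
  have := hmain.congr' hev
  simpa using this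

lemma Gfun_tendsto_one : Tendsto Gfun (𝓝[<] (1:ℝ)) (𝓝 0) := by
  have hmap : Tendsto (fun x : ℝ => 1-x) (𝓝[<] (1:ℝ)) (𝓝[>] (0:ℝ)) := by
    apply tendsto_nhdsWithin_of_tendsto_nhds_of_eventually_within
    · have h : Tendsto (fun x : ℝ => 1-x) (𝓝 (1:ℝ)) (𝓝 0) := by
        have hc : Continuous (fun x : ℝ => 1-x) := continuous_const.sub continuous_id
        have := hc.tendsto (1:ℝ); simpa using this
      exact h.mono_left nhdsWithin_le_nhds
    · filter_upwards [self_mem_nhdsWithin] with y hy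
      simp only [mem_Iio] at hy
      exact mem_Ioi.2 (by linarith)
  have h := Gfun_tendsto_zero.comp hmap
  have he : (Gfun ∘ fun x : ℝ => 1-x) = fun x : ℝ => - Gfun x := by
    funext y; simp [Function.comp, Gfun_reflect]
  rw [he] at h
  have := h.neg
  simpa using this

theorem Ifun_one_eq_zero :
    ∫ x in Set.Ioo (0 : ℝ) 1,
        (cfun x ^ 2 * x ^ (-((5 - Real.sqrt 13) / 2)) +
            cfun (1 - x) ^ 2 * (1 - x) ^ (-((5 - Real.sqrt 13) / 2)) - 1) *
          (x * (1 - x)) ^ (-(3 / 2) : ℝ) = 0 := by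
  set f : ℝ → ℝ := fun x =>
    (cfun x ^ 2 * x ^ (-((5 - Real.sqrt 13) / 2)) +
        cfun (1 - x) ^ 2 * (1 - x) ^ (-((5 - Real.sqrt 13) / 2)) - 1) *
      (x * (1 - x)) ^ (-(3 / 2) : ℝ) with hfdef
  by_cases hf : IntegrableOn f (Ioo (0:ℝ) 1) volume
  · have hIoc : IntegrableOn f (Ioc (0:ℝ) 1) volume :=
      (integrableOn_Ioc_iff_integrableOn_Ioo).2 hf
    have hII : IntervalIntegrable f volume 0 1 :=
      (intervalIntegrable_iff_integrableOn_Ioc_of_le (by norm_num)).2 hIoc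
    have hFTC := integral_eq_sub_of_hasDerivAt_of_tendsto (by norm_num : (0:ℝ) < 1)
        (fun x hx => Gfun_deriv hx.1 hx.2) hII Gfun_tendsto_zero Gfun_tendsto_one
    calc ∫ x in Ioo (0:ℝ) 1, f x = ∫ x in Ioc (0:ℝ) 1, f x := (integral_Ioc_eq_integral_Ioo).symm
      _ = ∫ x in (0:ℝ)..1, f x := (intervalIntegral.integral_of_le (by norm_num)).symm
      _ = 0 - 0 := hFTC
      _ = 0 := by ring
  · exact integral_undef hf
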